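/- Let (B,W) be a polygonal coloring of the plane with boundary ∂ satisfying condition (C3). Let A be a feasible point lying on the boundary segment s, let B₀ ∈ ∂ with dist(A,B₀) = 1, and let t be the (unique) boundary segment containing B₀. Then s and t are parallel, i.e., the lines containing s and t have the same direction. -/

import Mathlib

open scoped RealInnerProductSpace

noncomputable section

/-- `l` is an (affine) line in the plane: a nonempty one-dimensional affine subspace. -/
def IsLine (l : AffineSubspace ℝ (EuclideanSpace ℝ (Fin 2))) : Prop :=
  (l : Set (EuclideanSpace ℝ (Fin 2))).Nonempty ∧ Module.finrank ℝ l.direction = 1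

/-- A boundary segment: a closed convex subset of some affine line, containing
more than one point (it may be a segment, a ray, or a full line). -/
def IsSeg (s : Set (EuclideanSpace ℝ (Fin 2))) : Prop :=
  IsClosed s ∧ Convex ℝ s ∧ s.Nontrivial ∧
    ∃ l : AffineSubspace ℝ (EuclideanSpace ℝ (Fin 2)), IsLine l ∧ s ⊆ (l : Set _)

/-- `x` is an endpoint of the segment `s`: a point of `s` not in its relative
(intrinsic) interior. -/
def IsEndpoint (x : EuclideanSpace ℝ (Fin 2)) (s : Set (EuclideanSpace ℝ (Fin 2))) : Prop :=
  x ∈ s ∧ x ∉ intrinsicInterior ℝ s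

/-- The coloring `(B, Bᶜ)` is polygonal, with set of boundary segments `S`. -/
structure IsPolygonal (B : Set (EuclideanSpace ℝ (Fin 2)))
    (S : Set (Set (EuclideanSpace ℝ (Fin 2)))) : Prop where
  /-- The black points lie in the closure of the black interior. -/
  black_sub : B ⊆ closure (interior B)
  /-- The white points lie in the closure of the white interior. -/
  white_sub : Bᶜ ⊆ closure (interior Bᶜ)
  /-- Every member of `S` is a boundary segment. -/
  seg : ∀ s ∈ S, IsSeg s
  /-- The boundary of the coloring is the union of the boundary segments. -/
  boundary : frontier B = ⋃₀ S
  /-- Two distinct boundary segments meet in at most one point. -/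
  inter_subsingleton : ∀ s ∈ S, ∀ t ∈ S, s ≠ t → (s ∩ t).Subsingleton
  /-- A common point of two distinct boundary segments is an endpoint of both. -/
  inter_endpoint : ∀ s ∈ S, ∀ t ∈ S, s ≠ t → ∀ x ∈ s ∩ t, IsEndpoint x s ∧ IsEndpoint x t
  /-- No two distinct boundary segments sharing a common point lie on a common line. -/
  no_common_line : ∀ s ∈ S, ∀ t ∈ S, s ≠ t → (s ∩ t).Nonempty →
      ¬∃ l : AffineSubspace ℝ (EuclideanSpace ℝ (Fin 2)),
        IsLine l ∧ s ⊆ (l : Set _) ∧ t ⊆ (l : Set _)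
  /-- Every bounded region meets only finitely many boundary segments. -/
  loc_finite : ∀ R : Set (EuclideanSpace ℝ (Fin 2)), Bornology.IsBounded R →
      {s ∈ S | (s ∩ R).Nonempty}.Finite

/-- Condition (C3): every monochromatic unit triangle has a vertex on the boundary. -/
def C3 (B : Set (EuclideanSpace ℝ (Fin 2))) : Prop :=
  ∀ X Y Z : EuclideanSpace ℝ (Fin 2),
    dist X Y = 1 → dist Y Z = 1 → dist Z X = 1 →
    ((X ∈ B ∧ Y ∈ B ∧ Z ∈ B) ∨ (X ∉ B ∧ Y ∉ B ∧ Z ∉ B)) →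
    X ∈ frontier B ∨ Y ∈ frontier B ∨ Z ∈ frontier B

/-- `x` is a boundary vertex: an endpoint of some boundary segment. -/
def IsVertex (S : Set (Set (EuclideanSpace ℝ (Fin 2)))) (x : EuclideanSpace ℝ (Fin 2)) : Prop :=
  ∃ s ∈ S, IsEndpoint x s

/-- A boundary point `A` is feasible if it is not a boundary vertex and the unit
circle centered at `A` contains no boundary vertex. -/
def Feasible (B : Set (EuclideanSpace ℝ (Fin 2))) (S : Set (Set (EuclideanSpace ℝ (Fin 2))))
    (A : EuclideanSpace ℝ (Fin 2)) : Prop :=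
  A ∈ frontier B ∧ ¬IsVertex S A ∧ ∀ P ∈ Metric.sphere A 1, ¬IsVertex S P

/-- Two segments are parallel: any lines containing them have the same direction. -/
def SegParallel (s t : Set (EuclideanSpace ℝ (Fin 2))) : Prop :=
  ∀ l₁ l₂ : AffineSubspace ℝ (EuclideanSpace ℝ (Fin 2)),
    IsLine l₁ → IsLine l₂ → s ⊆ (l₁ : Set _) → t ⊆ (l₂ : Set _) →
    l₁.direction = l₂.direction

end

open scoped RealInnerProductSpace

noncomputable section Aux13

local notation "E" => EuclideanSpace ℝ (Fin 2)

/-- inner product in coordinates -/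
def ip (x y : E) : ℝ := x 0 * y 0 + x 1 * y 1

/-- rotation by 90 degrees -/
def Jv (x : E) : E := WithLp.toLp 2 ![-(x 1), x 0]

/-- 2x2 determinant -/
def det2 (x y : E) : ℝ := x 0 * y 1 - x 1 * y 0

@[simp] lemma Jv_zero (x : E) : Jv x 0 = -(x 1) := rfl
@[simp] lemma Jv_one (x : E) : Jv x 1 = x 0 := rfl

lemma ip_eq_inner (x y : E) : ip x y = ⟪x, y⟫ := by
  simp [PiLp.inner_apply, Fin.sum_univ_two, ip, mul_comm]

lemma abs_ip_le (x y : E) : |ip x y| ≤ ‖x‖ * ‖y‖ := by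
  rw [ip_eq_inner]; exact abs_real_inner_le_norm x y

lemma ip_self_eq_norm_sq (x : E) : ip x x = ‖x‖ ^ 2 := by
  rw [ip_eq_inner, real_inner_self_eq_norm_sq]

lemma norm_Jv (x : E) : ‖Jv x‖ = ‖x‖ := by
  rw [EuclideanSpace.norm_eq, EuclideanSpace.norm_eq]
  congr 1
  rw [Fin.sum_univ_two, Fin.sum_univ_two]
  simp [Jv]
  ring

lemma norm_pos_of_ne (x : E) (hx : x ≠ 0) : 0 < ‖x‖ := norm_pos_iff.2 hx

lemma ip_self_pos (x : E) (hx : x ≠ 0) : 0 < ip x x := by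
  rw [ip_self_eq_norm_sq]; exact pow_pos (norm_pos_of_ne x hx) 2

lemma ip_self_of_dist_one {x y : E} (h : dist x y = 1) : ip (x - y) (x - y) = 1 := by
  rw [ip_self_eq_norm_sq, ← dist_eq_norm, h]; norm_num

lemma dist_one_of_ip {x y : E} (h : ip (x - y) (x - y) = 1) : dist x y = 1 := by
  rw [ip_self_eq_norm_sq] at h
  rw [dist_eq_norm]
  nlinarith [norm_nonneg (x - y)]

/-- if `v ⊥ n` and `Jv v ⊥ n` and `v ≠ 0` then `n = 0` -/
lemma eq_zero_of_ip_ip (v n : E) (hv : v ≠ 0) (h1 : ip v n = 0) (h2 : ip (Jv v) n = 0) :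
    n = 0 := by
  have hvv : 0 < ip v v := ip_self_pos v hv
  simp only [ip, Jv_zero, Jv_one] at h1 h2 hvv
  ext i
  fin_cases i
  · show n 0 = 0
    have key : n 0 * (v 0 * v 0 + v 1 * v 1) = 0 := by linear_combination v 0 * h1 - v 1 * h2
    rcases mul_eq_zero.1 key with h | h
    · exact h
    · exact absurd h (ne_of_gt hvv)
  · show n 1 = 0
    have key : n 1 * (v 0 * v 0 + v 1 * v 1) = 0 := by linear_combination v 1 * h1 + v 0 * h2
    rcases mul_eq_zero.1 key with h | h
    · exact h
    · exact absurd h (ne_of_gt hvv)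

/-- key orthogonality lemma: if `v ⊥ n` and `w ⊥ Jv n` and `n ≠ 0` then `v ⊥ w`. -/
lemma ip_eq_zero_of_perp (n v w : E) (hn : n ≠ 0) (h1 : ip v n = 0) (h2 : ip w (Jv n) = 0) :
    ip v w = 0 := by
  have hnn : 0 < ip n n := ip_self_pos n hn
  have key : ip v w * ip n n = 0 := by
    simp only [ip, Jv_zero, Jv_one] at h1 h2 ⊢
    linear_combination (w 0 * n 0 + w 1 * n 1) * h1 - (v 0 * n 1 - v 1 * n 0) * h2
  rcases mul_eq_zero.1 key with h | h
  · exact h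
  · exact absurd h (ne_of_gt hnn)

/-- solving a 2x2 linear system -/
lemma solve2 (p q : E) (hpq : det2 p q ≠ 0) (r₁ r₂ : ℝ) :
    ∃ w : E, ip w p = r₁ ∧ ip w q = r₂ ∧
      ‖w‖ ≤ (|r₂| * ‖p‖ + |r₁| * ‖q‖) / |det2 p q| := by
  refine ⟨(det2 p q)⁻¹ • (r₂ • Jv p - r₁ • Jv q), ?_, ?_, ?_⟩
  · simp only [ip, det2, Jv] at *
    simp
    field_simp
    ring
  · simp only [ip, det2, Jv] at *
    simp
    field_simp
    ring
  · rw [norm_smul]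
    have h1 : ‖r₂ • Jv p - r₁ • Jv q‖ ≤ |r₂| * ‖p‖ + |r₁| * ‖q‖ := by
      calc ‖r₂ • Jv p - r₁ • Jv q‖ ≤ ‖r₂ • Jv p‖ + ‖r₁ • Jv q‖ := norm_sub_le _ _
      _ = |r₂| * ‖p‖ + |r₁| * ‖q‖ := by rw [norm_smul, norm_smul, norm_Jv, norm_Jv]; simp
    rw [div_eq_inv_mul]
    have : ‖(det2 p q)⁻¹‖ = |det2 p q|⁻¹ := by simp
    rw [this]
    apply mul_le_mul_of_nonneg_left h1 (by positivity)

/-- a vector orthogonal to `Jv d` is a multiple of `d` -/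
lemma eq_smul_of_perp (d x : E) (hd : d ≠ 0) (h : ip x (Jv d) = 0) :
    x = (ip x d / ip d d) • d := by
  have hdd : 0 < ip d d := ip_self_pos d hd
  have hdd' : ip d d ≠ 0 := ne_of_gt hdd
  simp only [ip, Jv_zero, Jv_one] at h hdd' ⊢
  ext i
  fin_cases i
  · show x 0 = (x 0 * d 0 + x 1 * d 1) / (d 0 * d 0 + d 1 * d 1) * d 0
    rw [div_mul_eq_mul_div, eq_div_iff hdd']
    linear_combination (-(d 1)) * h
  · show x 1 = (x 0 * d 0 + x 1 * d 1) / (d 0 * d 0 + d 1 * d 1) * d 1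
    rw [div_mul_eq_mul_div, eq_div_iff hdd']
    linear_combination d 0 * h


lemma ip_comm (x y : E) : ip x y = ip y x := by simp [ip]; ring

lemma ip_combo_left (a b : ℝ) (x y n : E) :
    ip (a • x + b • y) n = a * ip x n + b * ip y n := by
  simp [ip]; ring

lemma ip_sub_left (x y n : E) : ip (x - y) n = ip x n - ip y n := by
  simp [ip]; ring

lemma ip_add_left (x y n : E) : ip (x + y) n = ip x n + ip y n := by
  simp [ip]; ring

lemma ip_smul_left (c : ℝ) (x n : E) : ip (c • x) n = c * ip x n := by
  simp [ip]; ring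

lemma ip_neg_right (x n : E) : ip x (-n) = -ip x n := by
  simp [ip]; ring

lemma ip_Jv_self (x : E) : ip x (Jv x) = 0 := by
  simp [ip]; ring

lemma Jv_ne_zero {d : E} (hd : d ≠ 0) : Jv d ≠ 0 := by
  intro h
  apply hd
  ext i
  have h0 : Jv d 0 = 0 := by rw [h]; rfl
  have h1 : Jv d 1 = 0 := by rw [h]; rfl
  simp only [Jv_zero, Jv_one, neg_eq_zero] at h0 h1
  fin_cases i
  · exact h1
  · exact h0

/-- Local structure of the boundary near a non-vertex boundary point:
within distance `ε` of `P`, the boundary is exactly the line through `P`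
orthogonal to `n`, the open side in direction `n` is black interior and the
other open side is white interior. -/
structure LocStr (B : Set E) (P : E) (n : E) (ε : ℝ) : Prop where
  hn : n ≠ 0
  hε : 0 < ε
  frontier_iff : ∀ x : E, ‖x‖ < ε → (P + x ∈ frontier B ↔ ip x n = 0)
  black : ∀ x : E, ‖x‖ < ε → 0 < ip x n → P + x ∈ interior B
  white : ∀ x : E, ‖x‖ < ε → ip x n < 0 → P + x ∈ interior Bᶜ

lemma compl_frontier_eq (B : Set E) : (frontier B)ᶜ = interior B ∪ interior Bᶜ := by
  rw [interior_compl, frontier_eq_closure_inter_closure]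
  ext x; simp [not_and_or]; tauto

lemma not_frontier_of_interior {B : Set E} {x : E} (h : x ∈ interior B) : x ∉ frontier B :=
  fun hf => hf.2 h

lemma not_frontier_of_interior_compl {B : Set E} {x : E} (h : x ∈ interior Bᶜ) :
    x ∉ frontier B := by
  rw [interior_compl] at h
  exact fun hf => h hf.1

lemma locstr_exists {B : Set E} {S : Set (Set E)} (hpoly : IsPolygonal B S) (P : E)
    (hP : P ∈ frontier B) (hnv : ¬IsVertex S P) {s : Set E} (hs : s ∈ S) (hPs : P ∈ s) :
    ∃ n ε, LocStr B P n ε ∧ ∀ y ∈ s, ip (y - P) n = 0 := by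
  classical
  -- uniqueness of the segment through P
  have uniq : ∀ r ∈ S, P ∈ r → r = s := by
    intro r hr hPr
    by_contra hne
    exact hnv ⟨r, hr, (hpoly.inter_endpoint r hr s hs hne P ⟨hPr, hPs⟩).1⟩
  obtain ⟨hcl, hconv, hnontriv, l, hline, hsl⟩ := hpoly.seg s hs
  obtain ⟨y₀, hy₀, x₀, hx₀, hne0⟩ := hnontriv
  set d : E := y₀ - x₀ with hd_def
  have hd : d ≠ 0 := sub_ne_zero.2 hne0
  have hPl : P ∈ l := hsl hPs
  -- direction of l is the span of d
  have hd_mem : d ∈ l.direction := by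
    have := AffineSubspace.vsub_mem_direction (hsl hy₀) (hsl hx₀)
    simpa [hd_def] using this
  have hdir : (Submodule.span ℝ {d} : Submodule ℝ E) = l.direction := by
    apply Submodule.eq_of_le_of_finrank_le
    · rw [Submodule.span_le, Set.singleton_subset_iff]; exact hd_mem
    · rw [hline.2]
      rw [finrank_span_singleton hd]
  have mem_l_iff : ∀ z : E, z ∈ l ↔ ∃ c : ℝ, z - P = c • d := by
    intro z
    constructor
    · intro hz
      have := AffineSubspace.vsub_mem_direction hz hPl
      rw [← hdir] at this
      obtain ⟨c, hc⟩ := Submodule.mem_span_singleton.1 (by simpa using this)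
      exact ⟨c, hc.symm⟩
    · rintro ⟨c, hc⟩
      have hmem : c • d ∈ l.direction := by
        rw [← hdir]; exact Submodule.smul_mem _ c (Submodule.mem_span_singleton_self d)
      have := AffineSubspace.vadd_mem_of_mem_direction hmem hPl
      have hz : z = c • d +ᵥ P := by
        rw [vadd_eq_add]
        rw [← hc]; abel
      rw [hz]; exact this
  -- isolating ball: within δ the only segment is s
  have hFfin : {r ∈ S | (r ∩ Metric.ball P 1).Nonempty}.Finite :=
    hpoly.loc_finite _ Metric.isBounded_ball
  set F' : Set (Set E) := {r ∈ S | (r ∩ Metric.ball P 1).Nonempty} \ {s} with hF'def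
  have hF'fin : F'.Finite := hFfin.diff
  have hUcl : IsClosed (⋃₀ F') := by
    rw [Set.sUnion_eq_biUnion]
    exact hF'fin.isClosed_biUnion (fun r hr => (hpoly.seg r hr.1.1).1)
  have hPU : P ∉ ⋃₀ F' := by
    rintro ⟨r, hr, hPr⟩
    exact hr.2 (uniq r hr.1.1 hPr)
  obtain ⟨δ, hδpos, hδ⟩ := Metric.isOpen_iff.1 hUcl.isOpen_compl P hPU
  -- the frontier within the ball is s
  have front_char : ∀ x : E, ‖x‖ < min δ 1 → (P + x ∈ frontier B ↔ P + x ∈ s) := by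
    intro x hx
    constructor
    · intro hf
      rw [hpoly.boundary] at hf
      obtain ⟨r, hr, hmem⟩ := hf
      rcases eq_or_ne r s with rfl | hne
      · exact hmem
      · exfalso
        have hrF : r ∈ F' := by
          refine ⟨⟨hr, ⟨P + x, hmem, ?_⟩⟩, hne⟩
          rw [Metric.mem_ball, dist_eq_norm]
          simpa using lt_of_lt_of_le hx (min_le_right _ _)
        have hball : P + x ∈ Metric.ball P δ := by
          rw [Metric.mem_ball, dist_eq_norm]
          simpa using lt_of_lt_of_le hx (min_le_left _ _)
        exact hδ hball ⟨r, hrF, hmem⟩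
    · intro hmem
      rw [hpoly.boundary]
      exact ⟨s, hs, hmem⟩
  -- intrinsic interior: s contains a neighbourhood of P within its line
  have hPi : P ∈ intrinsicInterior ℝ s := by
    by_contra h
    exact hnv ⟨s, hs, hPs, h⟩
  obtain ⟨y, hy, hyP⟩ := hPi
  obtain ⟨ε₂, hε₂pos, hε₂⟩ := Metric.isOpen_iff.1 isOpen_interior y hy
  have seg_mem : ∀ c : ℝ, |c| * ‖d‖ < ε₂ → P + c • d ∈ s := by
    intro c hc
    have hdspan : d ∈ (affineSpan ℝ s).direction := by
      have := AffineSubspace.vsub_mem_direction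
        (mem_affineSpan ℝ hy₀) (mem_affineSpan ℝ hx₀)
      simpa [hd_def] using this
    have hmem : P + c • d ∈ affineSpan ℝ s := by
      have := AffineSubspace.vadd_mem_of_mem_direction
        (Submodule.smul_mem _ c hdspan) (mem_affineSpan ℝ hPs)
      simpa [vadd_eq_add, add_comm] using this
    have hdistz : dist (⟨P + c • d, hmem⟩ : affineSpan ℝ s) y < ε₂ := by
      rw [Subtype.dist_eq, hyP]
      rw [dist_eq_norm]
      simpa [norm_smul] using hc
    have := interior_subset (hε₂ hdistz)
    simpa using this
  -- the normal vector
  set n₀ : E := Jv d with hn₀def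
  have hn₀ : n₀ ≠ 0 := Jv_ne_zero hd
  set ε : ℝ := min (min δ 1) ε₂ with hεdef
  have hεpos : 0 < ε := lt_min (lt_min hδpos one_pos) hε₂pos
  have mainiff : ∀ x : E, ‖x‖ < ε → (P + x ∈ frontier B ↔ ip x n₀ = 0) := by
    intro x hx
    constructor
    · intro hf
      have hmem := (front_char x (lt_of_lt_of_le hx (min_le_left _ _))).1 hf
      obtain ⟨c, hc⟩ := (mem_l_iff (P + x)).1 (hsl hmem)
      have hxc : x = c • d := by rw [← hc]; abel
      rw [hxc, hn₀def, ip_smul_left, ip_Jv_self, mul_zero]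
    · intro hperp
      have hx_eq := eq_smul_of_perp d x hd (by rw [← hn₀def]; exact hperp)
      set c : ℝ := ip x d / ip d d with hcdef
      have hnorm : |c| * ‖d‖ < ε₂ := by
        have : ‖x‖ = |c| * ‖d‖ := by rw [hx_eq, norm_smul]; simp
        rw [← this]
        exact lt_of_lt_of_le hx (min_le_right _ _)
      have hmem := seg_mem c hnorm
      rw [← hx_eq] at hmem
      exact (front_char x (lt_of_lt_of_le hx (min_le_left _ _))).2 hmem
  -- the two open half-balls
  set Wplus : Set E := (fun x => P + x) '' (Metric.ball (0:E) ε ∩ {x | 0 < ip x n₀})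
    with hWplus
  set Wminus : Set E := (fun x => P + x) '' (Metric.ball (0:E) ε ∩ {x | ip x n₀ < 0})
    with hWminus
  have hconvplus : Convex ℝ (Metric.ball (0:E) ε ∩ {x | 0 < ip x n₀}) := by
    apply (convex_ball (0:E) ε).inter
    intro x hx z hz a b ha hb hab
    simp only [Set.mem_setOf_eq] at *
    rw [ip_combo_left]
    rcases eq_or_lt_of_le ha with rfl | ha'
    · simp only [zero_add] at hab; rw [hab]; simpa using hz
    · have : 0 ≤ b * ip z n₀ := mul_nonneg hb hz.le
      nlinarith [mul_pos ha' hx]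
  have hconvminus : Convex ℝ (Metric.ball (0:E) ε ∩ {x | ip x n₀ < 0}) := by
    apply (convex_ball (0:E) ε).inter
    intro x hx z hz a b ha hb hab
    simp only [Set.mem_setOf_eq] at *
    rw [ip_combo_left]
    rcases eq_or_lt_of_le ha with rfl | ha'
    · simp only [zero_add] at hab; rw [hab]; simpa using hz
    · have : b * ip z n₀ ≤ 0 := mul_nonpos_of_nonneg_of_nonpos hb hz.le
      nlinarith [mul_pos ha' (neg_pos.2 hx)]
  have hpreplus : IsPreconnected Wplus := (hconvplus.translate P).isPreconnected
  have hpreminus : IsPreconnected Wminus := (hconvminus.translate P).isPreconnected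
  have hsubplus : Wplus ⊆ interior B ∪ interior Bᶜ := by
    rintro _ ⟨x, ⟨hxball, hxpos⟩, rfl⟩
    rw [← compl_frontier_eq]
    intro hf
    have : ip x n₀ = 0 := (mainiff x (by simpa using hxball)).1 hf
    simp only [Set.mem_setOf_eq] at hxpos
    linarith
  have hsubminus : Wminus ⊆ interior B ∪ interior Bᶜ := by
    rintro _ ⟨x, ⟨hxball, hxneg⟩, rfl⟩
    rw [← compl_frontier_eq]
    intro hf
    have : ip x n₀ = 0 := (mainiff x (by simpa using hxball)).1 hf
    simp only [Set.mem_setOf_eq] at hxneg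
    linarith
  have hdisj : Disjoint (interior B) (interior Bᶜ) := by
    rw [Set.disjoint_left]
    intro z hz hz'
    exact (interior_subset hz') (interior_subset hz)
  have dichplus : Wplus ⊆ interior B ∨ Wplus ⊆ interior Bᶜ :=
    hpreplus.subset_or_subset isOpen_interior isOpen_interior hdisj hsubplus
  have dichminus : Wminus ⊆ interior B ∨ Wminus ⊆ interior Bᶜ :=
    hpreminus.subset_or_subset isOpen_interior isOpen_interior hdisj hsubminus
  -- both colours appear near P
  have hmeet : ∀ C : Set E, (∀ z, z ∈ interior C → z ∉ frontier B) →
      P ∈ closure (interior C) → (interior C ∩ (Wplus ∪ Wminus)).Nonempty := by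
    intro C hCf hPC
    obtain ⟨b, hb, hdist⟩ := Metric.mem_closure_iff.1 hPC ε hεpos
    refine ⟨b, hb, ?_⟩
    set x : E := b - P with hxdef
    have hbx : b = P + x := by rw [hxdef]; abel
    have hxnorm : ‖x‖ < ε := by
      rw [hxdef, ← dist_eq_norm, dist_comm]
      exact hdist
    have hxball : x ∈ Metric.ball (0:E) ε := by
      rw [Metric.mem_ball, dist_zero_right]; exact hxnorm
    have hne : ip x n₀ ≠ 0 := by
      intro h
      exact hCf b hb (by rw [hbx]; exact (mainiff x hxnorm).2 h)
    rcases lt_or_gt_of_ne hne with hlt | hgt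
    · right; exact ⟨x, ⟨hxball, hlt⟩, hbx.symm⟩
    · left; exact ⟨x, ⟨hxball, hgt⟩, hbx.symm⟩
  have hPB : P ∈ closure (interior B) := by
    have h1 : P ∈ closure B := frontier_subset_closure hP
    have h2 := closure_mono hpoly.black_sub h1
    rwa [closure_closure] at h2
  have hPW : P ∈ closure (interior Bᶜ) := by
    have h1 : P ∈ closure Bᶜ := (frontier_eq_closure_inter_closure (s := B) ▸ hP).2
    have h2 := closure_mono hpoly.white_sub h1
    rwa [closure_closure] at h2
  obtain ⟨bB, hbB, hbBW⟩ := hmeet B (fun z hz => not_frontier_of_interior hz) hPB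
  obtain ⟨bW, hbW, hbWW⟩ := hmeet Bᶜ (fun z hz => not_frontier_of_interior_compl hz) hPW
  have perp₀ : ∀ y ∈ s, ip (y - P) n₀ = 0 := by
    intro y hy
    obtain ⟨c, hc⟩ := (mem_l_iff y).1 (hsl hy)
    rw [hc, hn₀def, ip_smul_left, ip_Jv_self, mul_zero]
  rcases dichplus with h1 | h1 <;> rcases dichminus with h2 | h2
  · exfalso
    have : bW ∈ interior B := by
      rcases hbWW with h | h
      · exact h1 h
      · exact h2 h
    exact (Set.disjoint_left.1 hdisj this) hbW
  · -- Wplus black, Wminus white : n = n₀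
    refine ⟨n₀, ε, ⟨hn₀, hεpos, mainiff, ?_, ?_⟩, perp₀⟩
    · intro x hx hpos
      exact h1 ⟨x, ⟨by rw [Metric.mem_ball, dist_zero_right]; exact hx, hpos⟩, rfl⟩
    · intro x hx hneg
      exact h2 ⟨x, ⟨by rw [Metric.mem_ball, dist_zero_right]; exact hx, hneg⟩, rfl⟩
  · -- Wplus white, Wminus black : n = -n₀
    refine ⟨-n₀, ε, ⟨neg_ne_zero.2 hn₀, hεpos, ?_, ?_, ?_⟩, ?_⟩
    · intro x hx
      rw [ip_neg_right, neg_eq_zero]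
      exact mainiff x hx
    · intro x hx hpos
      rw [ip_neg_right] at hpos
      exact h2 ⟨x, ⟨by rw [Metric.mem_ball, dist_zero_right]; exact hx,
        by simp only [Set.mem_setOf_eq]; linarith⟩, rfl⟩
    · intro x hx hneg
      rw [ip_neg_right] at hneg
      exact h1 ⟨x, ⟨by rw [Metric.mem_ball, dist_zero_right]; exact hx,
        by simp only [Set.mem_setOf_eq]; linarith⟩, rfl⟩
    · intro y hy
      rw [ip_neg_right, perp₀ y hy, neg_zero]
  · exfalso
    have : bB ∈ interior Bᶜ := by
      rcases hbBW with h | h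
      · exact h1 h
      · exact h2 h
    exact (Set.disjoint_left.1 hdisj hbB) this


/-- rotation by angle with cosine `c`, sine `s` -/
def Tmap (c s : ℝ) (v : E) : E := c • v + s • Jv v

lemma Tmap_coord0 (c s : ℝ) (v : E) : Tmap c s v 0 = c * v 0 - s * v 1 := by
  simp [Tmap, Jv]; ring

lemma Tmap_coord1 (c s : ℝ) (v : E) : Tmap c s v 1 = s * v 0 + c * v 1 := by
  simp [Tmap, Jv]; ring

lemma norm_Tmap {c s : ℝ} (hcs : c ^ 2 + s ^ 2 = 1) (v : E) : ‖Tmap c s v‖ = ‖v‖ := by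
  rw [EuclideanSpace.norm_eq, EuclideanSpace.norm_eq]
  congr 1
  rw [Fin.sum_univ_two, Fin.sum_univ_two, Tmap_coord0, Tmap_coord1]
  simp only [Real.norm_eq_abs, sq_abs]
  ring_nf
  nlinarith [hcs, sq_nonneg (v 0), sq_nonneg (v 1)]

/-- the rigid motion `Q ↦ Q + mvv w c s X Q` : rotation about `X` composed with
translation by `w` -/
def mvv (w : E) (c s : ℝ) (X Q : E) : E := w + (Tmap c s (Q - X) - (Q - X))

lemma mvv_self (w : E) (c s : ℝ) (X : E) : mvv w c s X X = w := by
  ext i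
  fin_cases i <;> simp [mvv, Tmap, Jv]

lemma mvv_diff (w : E) (c s : ℝ) (X Q Q' : E) :
    (Q + mvv w c s X Q) - (Q' + mvv w c s X Q') = Tmap c s (Q - Q') := by
  ext i
  fin_cases i <;>
  · simp [mvv, Tmap, Jv]
    ring

lemma dist_mvv {c s : ℝ} (hcs : c ^ 2 + s ^ 2 = 1) (w : E) (X Q Q' : E) :
    dist (Q + mvv w c s X Q) (Q' + mvv w c s X Q') = dist Q Q' := by
  rw [dist_eq_norm, dist_eq_norm, mvv_diff, norm_Tmap hcs]

lemma ip_mvv (w : E) (c s : ℝ) (X Q n : E) :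
    ip (mvv w c s X Q) n
      = ip w n + (s * ip (Jv (Q - X)) n - (1 - c) * ip (Q - X) n) := by
  simp [mvv, Tmap, ip, Jv]
  ring

lemma norm_one_of_dist {X Y : E} (h : dist X Y = 1) : ‖Y - X‖ = 1 := by
  rw [← dist_eq_norm, dist_comm]; exact h

lemma abs_det2_le (u v : E) : |det2 u v| ≤ ‖u‖ * ‖v‖ := by
  have h : det2 u v = ip (Jv u) v := by simp [det2, ip]; ring
  rw [h, ← norm_Jv u]
  exact abs_ip_le _ _

lemma norm_mvv_le {c : ℝ} (hc0 : 0 ≤ c) (hc1 : c ≤ 1) (s : ℝ) (w : E) (X Q : E)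
    (hQ : ‖Q - X‖ ≤ 1) :
    ‖mvv w c s X Q‖ ≤ ‖w‖ + (1 - c) + |s| := by
  have h1 : ‖Tmap c s (Q - X) - (Q - X)‖ ≤ (1 - c) + |s| := by
    have : Tmap c s (Q - X) - (Q - X) = (c - 1) • (Q - X) + s • Jv (Q - X) := by
      ext i
      fin_cases i <;>
      · simp [Tmap, Jv]
        ring
    rw [this]
    calc ‖(c - 1) • (Q - X) + s • Jv (Q - X)‖
        ≤ ‖(c - 1) • (Q - X)‖ + ‖s • Jv (Q - X)‖ := norm_add_le _ _
      _ = |c - 1| * ‖Q - X‖ + |s| * ‖Q - X‖ := by rw [norm_smul, norm_smul, norm_Jv]; simp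
      _ ≤ (1 - c) * 1 + |s| * 1 := by
          have : |c - 1| = 1 - c := by rw [abs_of_nonpos (by linarith)]; ring
          rw [this]
          have h2 : 0 ≤ 1 - c := by linarith
          gcongr
      _ = (1 - c) + |s| := by ring
  calc ‖mvv w c s X Q‖ ≤ ‖w‖ + ‖Tmap c s (Q - X) - (Q - X)‖ := norm_add_le _ _
    _ ≤ ‖w‖ + ((1 - c) + |s|) := by linarith
    _ = ‖w‖ + (1 - c) + |s| := by ring

/-- Translation lemma: the third vertex of a unit triangle whose other two
vertices have transversal local boundary lines must lie on the boundary. -/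
lemma third_on_frontier {B : Set E} (hC3 : C3 B) {X Y W : E} {nX nY : E} {εX εY : ℝ}
    (locX : LocStr B X nX εX) (locY : LocStr B Y nY εY)
    (hXY : dist X Y = 1) (hYW : dist Y W = 1) (hWX : dist W X = 1)
    (hind : det2 nX nY ≠ 0) : W ∈ frontier B := by
  by_contra hW
  have hW' : W ∈ interior B ∪ interior Bᶜ := by
    rw [← compl_frontier_eq]; exact hW
  obtain ⟨v, hv1, hv2, -⟩ := solve2 nX nY hind 1 1
  have hvne : v ≠ 0 := by
    intro h
    rw [h] at hv1
    simp [ip] at hv1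
  have hvpos : 0 < ‖v‖ := norm_pos_of_ne v hvne
  have key : ∀ ρ > 0, (∀ z : E, ‖z‖ < ρ → W + z ∈ interior B) → False := by
    intro ρ hρ hball
    set m : ℝ := min εX (min εY ρ) with hm
    have hmpos : 0 < m := lt_min locX.hε (lt_min locY.hε hρ)
    set τ : ℝ := m / (2 * ‖v‖) with hτ
    have hτpos : 0 < τ := by positivity
    have hnorm : ‖τ • v‖ < m := by
      rw [norm_smul, Real.norm_eq_abs, abs_of_pos hτpos, hτ]
      rw [div_mul_eq_mul_div]
      rw [div_lt_iff₀ (by positivity)]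
      nlinarith [hmpos, hvpos]
    have hX' : X + τ • v ∈ interior B := by
      apply locX.black _ (lt_of_lt_of_le hnorm (min_le_left _ _))
      rw [ip_smul_left, hv1, mul_one]; exact hτpos
    have hY' : Y + τ • v ∈ interior B := by
      apply locY.black _ (lt_of_lt_of_le hnorm (le_trans (min_le_right _ _) (min_le_left _ _)))
      rw [ip_smul_left, hv2, mul_one]; exact hτpos
    have hW'' : W + τ • v ∈ interior B :=
      hball _ (lt_of_lt_of_le hnorm (le_trans (min_le_right _ _) (min_le_right _ _)))
    have hd1 : dist (X + τ • v) (Y + τ • v) = 1 := by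
      rw [dist_eq_norm]
      have : (X + τ • v) - (Y + τ • v) = X - Y := by abel
      rw [this, ← dist_eq_norm]; exact hXY
    have hd2 : dist (Y + τ • v) (W + τ • v) = 1 := by
      rw [dist_eq_norm]
      have : (Y + τ • v) - (W + τ • v) = Y - W := by abel
      rw [this, ← dist_eq_norm]; exact hYW
    have hd3 : dist (W + τ • v) (X + τ • v) = 1 := by
      rw [dist_eq_norm]
      have : (W + τ • v) - (X + τ • v) = W - X := by abel
      rw [this, ← dist_eq_norm]; exact hWX
    rcases hC3 _ _ _ hd1 hd2 hd3
        (Or.inl ⟨interior_subset hX', interior_subset hY', interior_subset hW''⟩) with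
      h | h | h
    · exact not_frontier_of_interior hX' h
    · exact not_frontier_of_interior hY' h
    · exact not_frontier_of_interior hW'' h
  have keyW : ∀ ρ > 0, (∀ z : E, ‖z‖ < ρ → W + z ∈ interior Bᶜ) → False := by
    intro ρ hρ hball
    set m : ℝ := min εX (min εY ρ) with hm
    have hmpos : 0 < m := lt_min locX.hε (lt_min locY.hε hρ)
    set τ : ℝ := m / (2 * ‖v‖) with hτ
    have hτpos : 0 < τ := by positivity
    have hnorm : ‖(-τ) • v‖ < m := by
      rw [norm_smul, Real.norm_eq_abs, abs_neg, abs_of_pos hτpos, hτ]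
      rw [div_mul_eq_mul_div]
      rw [div_lt_iff₀ (by positivity)]
      nlinarith [hmpos, hvpos]
    have hX' : X + (-τ) • v ∈ interior Bᶜ := by
      apply locX.white _ (lt_of_lt_of_le hnorm (min_le_left _ _))
      rw [ip_smul_left, hv1, mul_one]; linarith
    have hY' : Y + (-τ) • v ∈ interior Bᶜ := by
      apply locY.white _ (lt_of_lt_of_le hnorm (le_trans (min_le_right _ _) (min_le_left _ _)))
      rw [ip_smul_left, hv2, mul_one]; linarith
    have hW'' : W + (-τ) • v ∈ interior Bᶜ :=
      hball _ (lt_of_lt_of_le hnorm (le_trans (min_le_right _ _) (min_le_right _ _)))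
    have hd1 : dist (X + (-τ) • v) (Y + (-τ) • v) = 1 := by
      rw [dist_eq_norm]
      have : (X + (-τ) • v) - (Y + (-τ) • v) = X - Y := by abel
      rw [this, ← dist_eq_norm]; exact hXY
    have hd2 : dist (Y + (-τ) • v) (W + (-τ) • v) = 1 := by
      rw [dist_eq_norm]
      have : (Y + (-τ) • v) - (W + (-τ) • v) = Y - W := by abel
      rw [this, ← dist_eq_norm]; exact hYW
    have hd3 : dist (W + (-τ) • v) (X + (-τ) • v) = 1 := by
      rw [dist_eq_norm]
      have : (W + (-τ) • v) - (X + (-τ) • v) = W - X := by abel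
      rw [this, ← dist_eq_norm]; exact hWX
    have hmemX : X + (-τ) • v ∉ B := interior_subset hX'
    have hmemY : Y + (-τ) • v ∉ B := interior_subset hY'
    have hmemW : W + (-τ) • v ∉ B := interior_subset hW''
    rcases hC3 _ _ _ hd1 hd2 hd3 (Or.inr ⟨hmemX, hmemY, hmemW⟩) with h | h | h
    · exact not_frontier_of_interior_compl hX' h
    · exact not_frontier_of_interior_compl hY' h
    · exact not_frontier_of_interior_compl hW'' h
  rcases hW' with hWb | hWw
  · obtain ⟨ρ, hρ, hball⟩ := Metric.isOpen_iff.1 isOpen_interior W hWb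
    exact key ρ hρ (fun z hz => hball (by rw [Metric.mem_ball, dist_eq_norm]; simpa using hz))
  · obtain ⟨ρ, hρ, hball⟩ := Metric.isOpen_iff.1 isOpen_interior W hWw
    exact keyW ρ hρ (fun z hz => hball (by rw [Metric.mem_ball, dist_eq_norm]; simpa using hz))


lemma abs_sub_le' (a b : ℝ) : |a - b| ≤ |a| + |b| := by
  rw [sub_eq_add_neg]
  exact (abs_add_le _ _).trans (by rw [abs_neg])


section ArithHelpers

lemma mul_le_sq_of_le (a b N : ℝ) (ha : 0 ≤ a) (hb : 0 ≤ b) (haN : a ≤ N) (hbN : b ≤ N) :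
    a * b ≤ N ^ 2 := by nlinarith

lemma sqrt_aux1 (s : ℝ) (hs1 : |s| ≤ 1 / 2) : (0:ℝ) ≤ 1 - s ^ 2 := by
  nlinarith [sq_abs s, abs_nonneg s]

lemma sqrt_aux2 (c s : ℝ) (hc2 : c ^ 2 = 1 - s ^ 2) (hc0 : 0 ≤ c) : c ≤ 1 := by nlinarith

lemma sqrt_aux3 (c s : ℝ) (hc2 : c ^ 2 = 1 - s ^ 2) (hc0 : 0 ≤ c) (hc1 : c ≤ 1) :
    1 - c ≤ s ^ 2 := by nlinarith

lemma sqrt_aux4 (s : ℝ) (hs1 : |s| ≤ 1 / 2) : s ^ 2 ≤ |s| := by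
  nlinarith [sq_abs s, abs_nonneg s]

lemma bound_v (s t mY pY N : ℝ) (ht0 : 0 ≤ t) (htabs : t ≤ |s|)
    (hmYb : |mY| ≤ N) (hpYb : |pY| ≤ N) :
    |s * mY - t * pY| ≤ 2 * N * |s| := by
  have h1 : |s * mY - t * pY| ≤ |s * mY| + |t * pY| := by
    rw [sub_eq_add_neg]
    exact (abs_add_le _ _).trans (by rw [abs_neg])
  rw [abs_mul, abs_mul, abs_of_nonneg ht0] at h1
  nlinarith [abs_nonneg s, abs_nonneg mY, abs_nonneg pY]

lemma sign_aux1 (hv e : ℝ) (h5 : hv * e ≤ |hv| * (|hv| / 2)) (hpos : 0 < |hv|) :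
    0 < hv * (hv - e) := by
  nlinarith [abs_mul_abs_self hv, mul_pos hpos hpos]

lemma sign_aux2 (σ hv g aW : ℝ) (h1 : 0 < hv * (g * aW)) (hσ : 0 < σ * (hv * g)) :
    0 < σ * aW := by
  nlinarith [mul_pos h1 hσ, sq_nonneg (hv * g)]

lemma one_le_cube (N : ℝ) (h : 1 ≤ N) : N ≤ N ^ 3 := by
  have h2 : 0 ≤ N * ((N - 1) * (N + 1)) :=
    mul_nonneg (by linarith) (mul_nonneg (by linarith) (by linarith))
  nlinarith [h2]

lemma sq_le_one_aux (a : ℝ) (h0 : 0 < a) (h1 : a < 1) : (0:ℝ) ≤ 1 - a ^ 2 := by nlinarith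

lemma sqrt_lt_one_aux (a : ℝ) (h0 : 0 < a) (h1 : a < 1) :
    0 < 1 - Real.sqrt (1 - a ^ 2) := by
  have h1a : (0:ℝ) ≤ 1 - a ^ 2 := by nlinarith
  have hc2 : Real.sqrt (1 - a ^ 2) ^ 2 = 1 - a ^ 2 := Real.sq_sqrt h1a
  have hc0 : 0 ≤ Real.sqrt (1 - a ^ 2) := Real.sqrt_nonneg _
  nlinarith

end ArithHelpers

set_option maxHeartbeats 4000000 in
/-- The fundamental triangle relations: for a unit triangle with all three
vertices having local line structure, and two of the normals transversal,
the "moment" and "position" linear relations hold. -/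
lemma triangle_rel {B : Set E} (hC3 : C3 B) {X Y W : E} {nX nY nW : E} {εX εY εW : ℝ}
    (locX : LocStr B X nX εX) (locY : LocStr B Y nY εY) (locW : LocStr B W nW εW)
    (hXY : dist X Y = 1) (hYW : dist Y W = 1) (hWX : dist W X = 1)
    (hind : det2 nX nY ≠ 0) :
    det2 nW nX * ip (Jv (Y - X)) nY + det2 nX nY * ip (Jv (W - X)) nW = 0 ∧
    det2 nW nX * ip (Y - X) nY + det2 nX nY * ip (W - X) nW = 0 := by
  set α : ℝ := det2 nY nW with hα
  set β : ℝ := det2 nW nX with hβ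
  set γ : ℝ := det2 nX nY with hγ
  set mY : ℝ := ip (Jv (Y - X)) nY with hmYdef
  set pY : ℝ := ip (Y - X) nY with hpYdef
  set mW : ℝ := ip (Jv (W - X)) nW with hmWdef
  set pW : ℝ := ip (W - X) nW with hpWdef
  set N : ℝ := ‖nX‖ + ‖nY‖ + ‖nW‖ + 1 with hN
  have hG : 0 < |γ| := abs_pos.2 hind
  set C : ℝ := 6 * N ^ 4 / |γ| + 2 with hC
  set εm : ℝ := min εX (min εY εW) with hεm
  have hεmpos : 0 < εm := by
    rw [hεm]; exact lt_min locX.hε (lt_min locY.hε locW.hε)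
  have hN1 : 1 ≤ N := by
    rw [hN]
    linarith only [norm_nonneg nX, norm_nonneg nY, norm_nonneg nW]
  have hCpos : 0 < C := by rw [hC]; positivity
  set s₀ : ℝ := min (1/2) (εm / (C + 1)) with hs₀
  have hs₀pos : 0 < s₀ := by rw [hs₀]; exact lt_min (by norm_num) (by positivity)
  have hs₀half : s₀ ≤ 1 / 2 := by rw [hs₀]; exact min_le_left _ _
  have hs₀C : s₀ ≤ εm / (C + 1) := by rw [hs₀]; exact min_le_right _ _
  have hεmX : εm ≤ εX := by rw [hεm]; exact min_le_left _ _
  have hεmY : εm ≤ εY := by rw [hεm]; exact le_trans (min_le_right _ _) (min_le_left _ _)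
  have hεmW : εm ≤ εW := by rw [hεm]; exact le_trans (min_le_right _ _) (min_le_right _ _)
  have hnYX : ‖Y - X‖ = 1 := norm_one_of_dist hXY
  have hnWX : ‖W - X‖ = 1 := by rw [← dist_eq_norm]; exact hWX
  have hNnX : ‖nX‖ ≤ N := by
    rw [hN]; linarith only [norm_nonneg nY, norm_nonneg nW]
  have hNnY : ‖nY‖ ≤ N := by
    rw [hN]; linarith only [norm_nonneg nX, norm_nonneg nW]
  have hNnW : ‖nW‖ ≤ N := by
    rw [hN]; linarith only [norm_nonneg nX, norm_nonneg nY]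
  have hmYb : |mY| ≤ N := by
    have h1 : |ip (Jv (Y - X)) nY| ≤ ‖Jv (Y - X)‖ * ‖nY‖ := abs_ip_le _ _
    rw [norm_Jv, hnYX, one_mul, ← hmYdef] at h1
    linarith only [h1, hNnY]
  have hpYb : |pY| ≤ N := by
    have h1 : |ip (Y - X) nY| ≤ ‖Y - X‖ * ‖nY‖ := abs_ip_le _ _
    rw [hnYX, one_mul, ← hpYdef] at h1
    linarith only [h1, hNnY]
  have hmWb : |mW| ≤ N := by
    have h1 : |ip (Jv (W - X)) nW| ≤ ‖Jv (W - X)‖ * ‖nW‖ := abs_ip_le _ _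
    rw [norm_Jv, hnWX, one_mul, ← hmWdef] at h1
    linarith only [h1, hNnW]
  have hpWb : |pW| ≤ N := by
    have h1 : |ip (W - X) nW| ≤ ‖W - X‖ * ‖nW‖ := abs_ip_le _ _
    rw [hnWX, one_mul, ← hpWdef] at h1
    linarith only [h1, hNnW]
  have hαb : |α| ≤ N ^ 2 := by
    have h1 := abs_det2_le nY nW
    have h2 := mul_le_sq_of_le _ _ _ (norm_nonneg nY) (norm_nonneg nW) hNnY hNnW
    rw [← hα] at h1
    linarith only [h1, h2]
  have hβb : |β| ≤ N ^ 2 := by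
    have h1 := abs_det2_le nW nX
    have h2 := mul_le_sq_of_le _ _ _ (norm_nonneg nW) (norm_nonneg nX) hNnW hNnX
    rw [← hβ] at h1
    linarith only [h1, h2]
  have hγb : |γ| ≤ N ^ 2 := by
    have h1 := abs_det2_le nX nY
    have h2 := mul_le_sq_of_le _ _ _ (norm_nonneg nX) (norm_nonneg nY) hNnX hNnY
    rw [← hγ] at h1
    linarith only [h1, h2]
  have hcram : ∀ z : E, γ * ip z nW = -(α * ip z nX) - β * ip z nY := by
    intro z
    simp only [hα, hβ, hγ, ip, det2]
    ring
  have hCval : C = 6 * N ^ 4 / |γ| + 2 := hC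
  have hind' : γ ≠ 0 := hind
  clear_value α β γ mY pY mW pW N C εm s₀
  -- the key claim
  have hkey : ∀ s : ℝ, |s| < s₀ →
      s * (β * mY + γ * mW) - (1 - Real.sqrt (1 - s ^ 2)) * (β * pY + γ * pW) = 0 := by
    intro s hs
    by_contra hne
    set c : ℝ := Real.sqrt (1 - s ^ 2) with hcdef
    have hs1 : |s| ≤ 1 / 2 := le_of_lt (lt_of_lt_of_le hs hs₀half)
    have h1s : (0:ℝ) ≤ 1 - s ^ 2 := sqrt_aux1 s hs1
    have hc2 : c ^ 2 = 1 - s ^ 2 := by rw [hcdef]; exact Real.sq_sqrt h1s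
    have hc0 : 0 ≤ c := by rw [hcdef]; exact Real.sqrt_nonneg _
    have hc1 : c ≤ 1 := sqrt_aux2 c s hc2 hc0
    have hcs : c ^ 2 + s ^ 2 = 1 := by rw [hc2]; ring
    clear_value c
    set t : ℝ := 1 - c with htdef
    have ht0 : 0 ≤ t := by rw [htdef]; linarith
    have htle : t ≤ s ^ 2 := by rw [htdef]; exact sqrt_aux3 c s hc2 hc0 hc1
    have htabs : t ≤ |s| := le_trans htle (sqrt_aux4 s hs1)
    set vY : ℝ := s * mY - t * pY with hvYdef
    set vW : ℝ := s * mW - t * pW with hvWdef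
    set hval : ℝ := s * (β * mY + γ * mW) - t * (β * pY + γ * pW) with hhval
    have hformula : hval = β * vY + γ * vW := by rw [hhval, hvYdef, hvWdef]; ring
    have hhne : hval ≠ 0 := hne
    have hhpos : 0 < |hval| := abs_pos.2 hhne
    clear_value vY vW hval
    have habs_vY : |vY| ≤ 2 * N * |s| := by
      rw [hvYdef]; exact bound_v s t mY pY N ht0 htabs hmYb hpYb
    have habs_vW : |vW| ≤ 2 * N * |s| := by
      rw [hvWdef]; exact bound_v s t mW pW N ht0 htabs hmWb hpWb
    have habs_hval : |hval| ≤ 4 * N ^ 3 * |s| := by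
      have h1 : |hval| ≤ |β| * |vY| + |γ| * |vW| := by
        rw [hformula]
        calc |β * vY + γ * vW| ≤ |β * vY| + |γ * vW| := abs_add_le _ _
          _ = |β| * |vY| + |γ| * |vW| := by rw [abs_mul, abs_mul]
      have h2 : |β| * |vY| ≤ N ^ 2 * (2 * N * |s|) :=
        mul_le_mul hβb habs_vY (abs_nonneg vY) (by positivity)
      have h3 : |γ| * |vW| ≤ N ^ 2 * (2 * N * |s|) :=
        mul_le_mul hγb habs_vW (abs_nonneg vW) (by positivity)
      have h4 : N ^ 2 * (2 * N * |s|) + N ^ 2 * (2 * N * |s|) = 4 * N ^ 3 * |s| := by ring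
      linarith only [h1, h2, h3, h4]
    set δ : ℝ := |hval| / (2 * (|α| + |β|) + 2) with hδdef
    have hDpos : (0:ℝ) < 2 * (|α| + |β|) + 2 := by
      linarith only [abs_nonneg α, abs_nonneg β]
    have hδpos : 0 < δ := by rw [hδdef]; exact div_pos hhpos hDpos
    have hδD : δ * (2 * (|α| + |β|) + 2) = |hval| := by
      rw [hδdef]; exact div_mul_cancel₀ _ (ne_of_gt hDpos)
    clear_value δ
    have hδle : (|α| + |β|) * δ ≤ |hval| / 2 := by linarith only [hδD, hδpos]
    have hδle2 : δ ≤ |hval| / 2 := by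
      have h : δ * 2 ≤ δ * (2 * (|α| + |β|) + 2) := by
        apply mul_le_mul_of_nonneg_left ?_ hδpos.le
        linarith only [abs_nonneg α, abs_nonneg β]
      linarith only [h, hδD]
    set σ : ℝ := if 0 < hval * γ then 1 else -1 with hσdef
    have hσsq : σ * σ = 1 := by
      rw [hσdef]; split_ifs <;> norm_num
    have hσabs : |σ| = 1 := by
      rw [hσdef]; split_ifs <;> norm_num
    have hσpos : 0 < σ * (hval * γ) := by
      rw [hσdef]
      split_ifs with hcase
      · rw [one_mul]; exact hcase
      · have h5 : hval * γ ≠ 0 := mul_ne_zero hhne hind'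
        have h6 : hval * γ < 0 := lt_of_le_of_ne (le_of_not_gt hcase) h5
        linarith only [h6]
    set r1 : ℝ := σ * δ with hr1
    set r2 : ℝ := σ * δ - vY with hr2
    obtain ⟨w, hw1, hw2, hwnorm⟩ := solve2 nX nY (by rw [← hγ]; exact hind') r1 r2
    rw [← hγ] at hwnorm
    -- offsets
    have haX : ip (mvv w c s X X) nX = σ * δ := by rw [mvv_self, hw1, hr1]
    have haY : ip (mvv w c s X Y) nY = σ * δ := by
      rw [ip_mvv, hw2, ← hmYdef, ← hpYdef, ← htdef, ← hvYdef, hr2]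
      ring
    have haW : γ * ip (mvv w c s X W) nW = hval - (α + β) * (σ * δ) := by
      rw [ip_mvv, ← hmWdef, ← hpWdef, ← htdef, ← hvWdef]
      have e1 : γ * (ip w nW + vW) = γ * ip w nW + γ * vW := by ring
      rw [e1, hcram w, hw1, hw2, hformula, hr1, hr2]
      ring
    have haWsgn : 0 < σ * ip (mvv w c s X W) nW := by
      have h1 : 0 < hval * (γ * ip (mvv w c s X W) nW) := by
        rw [haW]
        have h2 : |(α + β) * (σ * δ)| ≤ |hval| / 2 := by
          rw [abs_mul, abs_mul, hσabs, one_mul]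
          have h3 : |α + β| * |δ| ≤ (|α| + |β|) * δ := by
            rw [abs_of_pos hδpos]
            exact mul_le_mul_of_nonneg_right (abs_add_le _ _) (le_of_lt hδpos)
          linarith only [h3, hδle]
        have h5 : hval * ((α + β) * (σ * δ)) ≤ |hval| * (|hval| / 2) := by
          calc hval * ((α + β) * (σ * δ)) ≤ |hval * ((α + β) * (σ * δ))| := le_abs_self _
            _ = |hval| * |(α + β) * (σ * δ)| := abs_mul _ _
            _ ≤ |hval| * (|hval| / 2) := mul_le_mul_of_nonneg_left h2 (abs_nonneg _)
        exact sign_aux1 hval ((α + β) * (σ * δ)) h5 hhpos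
      exact sign_aux2 σ hval γ _ h1 hσpos
    -- smallness
    have hδb : δ ≤ 2 * N ^ 3 * |s| := by linarith only [hδle2, habs_hval]
    have hr1b : |r1| ≤ 2 * N ^ 3 * |s| := by
      rw [hr1, abs_mul, hσabs, one_mul, abs_of_pos hδpos]
      exact hδb
    have hNN3 : N ≤ N ^ 3 := one_le_cube N hN1
    have hr2b : |r2| ≤ 4 * N ^ 3 * |s| := by
      rw [hr2]
      have h1 := abs_sub_le' (σ * δ) vY
      rw [abs_mul, hσabs, one_mul, abs_of_pos hδpos] at h1
      have h5 : 2 * N * |s| ≤ 2 * N ^ 3 * |s| := by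
        have h6 := mul_nonneg (sub_nonneg.2 hNN3) (abs_nonneg s)
        linarith only [h6]
      linarith only [h1, h5, hδb, habs_vY]
    have hwb : ‖w‖ ≤ 6 * N ^ 4 / |γ| * |s| := by
      have h1 : |r2| * ‖nX‖ + |r1| * ‖nY‖ ≤ 6 * N ^ 4 * |s| := by
        have h2 : |r2| * ‖nX‖ ≤ 4 * N ^ 3 * |s| * N :=
          mul_le_mul hr2b hNnX (norm_nonneg nX) (by positivity)
        have h3 : |r1| * ‖nY‖ ≤ 2 * N ^ 3 * |s| * N :=
          mul_le_mul hr1b hNnY (norm_nonneg nY) (by positivity)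
        have h4 : 4 * N ^ 3 * |s| * N + 2 * N ^ 3 * |s| * N = 6 * N ^ 4 * |s| := by ring
        linarith only [h2, h3, h4]
      calc ‖w‖ ≤ (|r2| * ‖nX‖ + |r1| * ‖nY‖) / |γ| := hwnorm
        _ ≤ 6 * N ^ 4 * |s| / |γ| := by gcongr
        _ = 6 * N ^ 4 / |γ| * |s| := by ring
    have hmvb : ∀ Q : E, ‖Q - X‖ ≤ 1 → ‖mvv w c s X Q‖ < εm := by
      intro Q hQ
      have h1 := norm_mvv_le hc0 hc1 s w X Q hQ
      have h2 : ‖mvv w c s X Q‖ ≤ C * |s| := by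
        rw [hCval]
        have e2 : (1 : ℝ) - c = t := by rw [htdef]
        have e3 : (6 * N ^ 4 / |γ| + 2) * |s| = 6 * N ^ 4 / |γ| * |s| + |s| + |s| := by ring
        rw [e3]
        rw [e2] at h1
        linarith only [h1, hwb, htabs]
      have h3 : |s| < εm / (C + 1) := lt_of_lt_of_le hs hs₀C
      have h4 : C * |s| < εm := by
        rw [lt_div_iff₀ (by positivity)] at h3
        have e4 : |s| * (C + 1) = C * |s| + |s| := by ring
        linarith only [h3, e4, abs_nonneg s]
      linarith only [h2, h4]
    have hmX : ‖mvv w c s X X‖ < εX :=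
      lt_of_lt_of_le (hmvb X (by simp)) hεmX
    have hmY' : ‖mvv w c s X Y‖ < εY :=
      lt_of_lt_of_le (hmvb Y (le_of_eq hnYX)) hεmY
    have hmW' : ‖mvv w c s X W‖ < εW :=
      lt_of_lt_of_le (hmvb W (le_of_eq hnWX)) hεmW
    -- distances
    have hd1 : dist (X + mvv w c s X X) (Y + mvv w c s X Y) = 1 := by
      rw [dist_mvv hcs]; exact hXY
    have hd2 : dist (Y + mvv w c s X Y) (W + mvv w c s X W) = 1 := by
      rw [dist_mvv hcs]; exact hYW
    have hd3 : dist (W + mvv w c s X W) (X + mvv w c s X X) = 1 := by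
      rw [dist_mvv hcs]; exact hWX
    -- monochromatic contradiction
    rw [hσdef] at haX haY haWsgn
    split_ifs at haX haY haWsgn with hcase
    · rw [one_mul] at haX haY haWsgn
      have hX' : X + mvv w c s X X ∈ interior B :=
        locX.black _ hmX (by rw [haX]; exact hδpos)
      have hY' : Y + mvv w c s X Y ∈ interior B :=
        locY.black _ hmY' (by rw [haY]; exact hδpos)
      have hW' : W + mvv w c s X W ∈ interior B := locW.black _ hmW' haWsgn
      rcases hC3 _ _ _ hd1 hd2 hd3
          (Or.inl ⟨interior_subset hX', interior_subset hY', interior_subset hW'⟩) with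
        h | h | h
      · exact not_frontier_of_interior hX' h
      · exact not_frontier_of_interior hY' h
      · exact not_frontier_of_interior hW' h
    · rw [neg_one_mul] at haX haY haWsgn
      have hX' : X + mvv w c s X X ∈ interior Bᶜ :=
        locX.white _ hmX (by rw [haX]; linarith)
      have hY' : Y + mvv w c s X Y ∈ interior Bᶜ :=
        locY.white _ hmY' (by rw [haY]; linarith)
      have hW' : W + mvv w c s X W ∈ interior Bᶜ := locW.white _ hmW' (by linarith)
      rcases hC3 _ _ _ hd1 hd2 hd3
          (Or.inr ⟨interior_subset hX', interior_subset hY', interior_subset hW'⟩) with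
        h | h | h
      · exact not_frontier_of_interior_compl hX' h
      · exact not_frontier_of_interior_compl hY' h
      · exact not_frontier_of_interior_compl hW' h
  -- extract the two relations
  set a : ℝ := s₀ / 2 with hadef
  have ha0 : 0 < a := by rw [hadef]; linarith only [hs₀pos]
  have haabs : |a| < s₀ := by rw [abs_of_pos ha0, hadef]; linarith only [hs₀pos]
  have hanegabs : |(-a)| < s₀ := by rw [abs_neg]; exact haabs
  have e1 := hkey a haabs
  have e2 := hkey (-a) hanegabs
  rw [neg_sq] at e2
  have ha1 : a < 1 := by
    rw [hadef]
    linarith only [hs₀half, hs₀pos]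
  have htpos : 0 < 1 - Real.sqrt (1 - a ^ 2) := sqrt_lt_one_aux a ha0 ha1
  constructor
  · have h3 : 2 * a * (β * mY + γ * mW) = 0 := by linarith only [e1, e2]
    rcases mul_eq_zero.1 h3 with h | h
    · exfalso; linarith only [h, ha0]
    · exact h
  · have h3 : 2 * (1 - Real.sqrt (1 - a ^ 2)) * (β * pY + γ * pW) = 0 := by
      linarith only [e1, e2]
    rcases mul_eq_zero.1 h3 with h | h
    · exfalso; linarith only [h, htpos]
    · exact h


lemma ip_Jv_left (u v : E) : ip (Jv u) v = det2 u v := by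
  simp [ip, det2, Jv]; ring

lemma ip_Jv_right (u v : E) : ip u (Jv v) = det2 v u := by
  simp [ip, det2, Jv]; ring

lemma ip_Jv_swap (v n : E) : ip (Jv v) n = -(ip v (Jv n)) := by
  simp [ip, Jv]

lemma ip_smul_right (c : ℝ) (x n : E) : ip x (c • n) = c * ip x n := by
  simp [ip]; ring

lemma det2_self (u : E) : det2 u u = 0 := by simp [det2]; ring

lemma JvJv (v : E) : Jv (Jv v) = -v := by
  ext i
  fin_cases i <;> simp [Jv]

lemma line_dir {l : AffineSubspace ℝ E} (hl : IsLine l) {x y : E} (hx : x ∈ l) (hy : y ∈ l)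
    (hxy : y - x ≠ 0) : l.direction = Submodule.span ℝ {y - x} := by
  symm
  apply Submodule.eq_of_le_of_finrank_le
  · rw [Submodule.span_le, Set.singleton_subset_iff]
    simpa using AffineSubspace.vsub_mem_direction hy hx
  · rw [hl.2, finrank_span_singleton hxy]

/-- distances in the rotated configuration -/
lemma hex_dists (A B₀ : E) (h : dist A B₀ = 1) :
    dist B₀ (A + Tmap (1/2) (Real.sqrt 3 / 2) (B₀ - A)) = 1 ∧
    dist (A + Tmap (1/2) (Real.sqrt 3 / 2) (B₀ - A)) A = 1 ∧
    dist (A + Tmap (1/2) (Real.sqrt 3 / 2) (B₀ - A))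
      (A + Tmap (1/2) (Real.sqrt 3 / 2) (B₀ - A) - (B₀ - A)) = 1 ∧
    dist (A + Tmap (1/2) (Real.sqrt 3 / 2) (B₀ - A) - (B₀ - A)) A = 1 := by
  have hu := ip_self_of_dist_one h
  have h3 : Real.sqrt 3 ^ 2 = 3 := Real.sq_sqrt (by norm_num)
  simp only [ip] at hu
  simp only [PiLp.sub_apply] at hu
  refine ⟨?_, ?_, ?_, ?_⟩ <;> apply dist_one_of_ip <;>
    simp only [ip, Tmap, Jv, PiLp.sub_apply, PiLp.add_apply, PiLp.smul_apply, smul_eq_mul,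
      PiLp.toLp_apply, Matrix.cons_val_zero, Matrix.cons_val_one, Matrix.head_cons]
  · linear_combination hu + (((B₀ 0 - A 0) ^ 2 + (B₀ 1 - A 1) ^ 2) / 4) * h3
  · linear_combination hu + (((B₀ 0 - A 0) ^ 2 + (B₀ 1 - A 1) ^ 2) / 4) * h3
  · linear_combination hu
  · linear_combination hu + (((B₀ 0 - A 0) ^ 2 + (B₀ 1 - A 1) ^ 2) / 4) * h3

/-- the final algebraic contradiction -/
lemma final_contra (ZZ OO A P₀ P₁ P₂ : E)
    (hlin : P₂ = P₁ - (P₀ - A))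
    (qA : ip (ZZ - A) (OO - A) = 0)
    (q0 : ip (ZZ - P₀) (OO - P₀) = 0)
    (q1 : ip (ZZ - P₁) (OO - P₁) = 0)
    (q2 : ip (ZZ - P₂) (OO - P₂) = 0)
    (h0 : ip (P₀ - A) (P₀ - A) = 1)
    (h1 : ip (P₁ - A) (P₁ - A) = 1)
    (h2 : ip (P₂ - A) (P₂ - A) = 1) : False := by
  subst hlin
  have key : (0:ℝ) = 1 := by
    simp only [ip, PiLp.sub_apply] at qA q0 q1 q2 h0 h1 h2
    linear_combination -q2 + q1 - q0 + qA + h2 - h1 + h0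
  norm_num at key

end Aux13
noncomputable section

theorem stmt13 (B : Set (EuclideanSpace ℝ (Fin 2))) (S : Set (Set (EuclideanSpace ℝ (Fin 2))))
    (hpoly : IsPolygonal B S) (hC3 : C3 B)
    (A : EuclideanSpace ℝ (Fin 2)) (hA : Feasible B S A)
    (s : Set (EuclideanSpace ℝ (Fin 2))) (hs : s ∈ S) (hAs : A ∈ s)
    (B₀ : EuclideanSpace ℝ (Fin 2)) (hB₀ : B₀ ∈ frontier B) (hdist : dist A B₀ = 1)
    (t : Set (EuclideanSpace ℝ (Fin 2))) (ht : t ∈ S) (hB₀t : B₀ ∈ t) :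
    SegParallel s t := by
  classical
  obtain ⟨nA, εA, locA, hperpA⟩ := locstr_exists hpoly A hA.1 hA.2.1 hs hAs
  have hB₀s : B₀ ∈ Metric.sphere A 1 := by
    rw [Metric.mem_sphere, dist_comm]; exact hdist
  obtain ⟨n₀, ε₀, loc0, hperp0⟩ := locstr_exists hpoly B₀ hB₀ (hA.2.2 B₀ hB₀s) ht hB₀t
  have hpar : det2 nA n₀ = 0 := by
    by_contra hind
    obtain ⟨hd01, hd1A, hd12, hd2A⟩ := hex_dists A B₀ hdist
    set P₁ : EuclideanSpace ℝ (Fin 2) := A + Tmap (1/2) (Real.sqrt 3 / 2) (B₀ - A) with hP₁def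
    set P₂ : EuclideanSpace ℝ (Fin 2) := P₁ - (B₀ - A) with hP₂def
    -- P₁ on the boundary, with local structure
    have hfP₁ : P₁ ∈ frontier B := third_on_frontier hC3 locA loc0 hdist hd01 hd1A hind
    have hP₁sphere : P₁ ∈ Metric.sphere A 1 := by rw [Metric.mem_sphere]; exact hd1A
    have hnv1 : ¬IsVertex S P₁ := hA.2.2 P₁ hP₁sphere
    have hfP₁' := hfP₁
    rw [hpoly.boundary] at hfP₁'
    obtain ⟨r₁, hr₁S, hP₁r₁⟩ := hfP₁'
    obtain ⟨n₁, ε₁, loc1, -⟩ := locstr_exists hpoly P₁ hfP₁ hnv1 hr₁S hP₁r₁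
    obtain ⟨M1, R1⟩ := triangle_rel hC3 locA loc0 loc1 hdist hd01 hd1A hind
    have hP₁A : P₁ - A ≠ 0 := by
      intro h0
      have he : P₁ = A := sub_eq_zero.1 h0
      rw [he] at hd1A
      simp at hd1A
    have hind1 : det2 nA n₁ ≠ 0 := by
      intro h0
      have hb : det2 n₁ nA = 0 := by
        simp only [det2] at h0 ⊢; linarith only [h0]
      rw [hb, zero_mul, zero_add] at M1 R1
      have hm := (mul_eq_zero.1 M1).resolve_left hind
      have hp := (mul_eq_zero.1 R1).resolve_left hind
      exact loc1.hn (eq_zero_of_ip_ip (P₁ - A) n₁ hP₁A hp hm)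
    -- P₂ on the boundary, with local structure
    have hdA1 : dist A P₁ = 1 := by rw [dist_comm]; exact hd1A
    have hfP₂ : P₂ ∈ frontier B := third_on_frontier hC3 locA loc1 hdA1 hd12 hd2A hind1
    have hP₂sphere : P₂ ∈ Metric.sphere A 1 := by rw [Metric.mem_sphere]; exact hd2A
    have hnv2 : ¬IsVertex S P₂ := hA.2.2 P₂ hP₂sphere
    have hfP₂' := hfP₂
    rw [hpoly.boundary] at hfP₂'
    obtain ⟨r₂, hr₂S, hP₂r₂⟩ := hfP₂'
    obtain ⟨n₂, ε₂, loc2, -⟩ := locstr_exists hpoly P₂ hfP₂ hnv2 hr₂S hP₂r₂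
    obtain ⟨M2, R2⟩ := triangle_rel hC3 locA loc1 loc2 hdA1 hd12 hd2A hind1
    -- common point of the three lines, and of the three normal lines
    set ZZ : EuclideanSpace ℝ (Fin 2) :=
      A + (ip (B₀ - A) n₀ / det2 nA n₀) • Jv nA with hZdef
    set OO : EuclideanSpace ℝ (Fin 2) :=
      A + (-(ip (B₀ - A) (Jv n₀) / det2 nA n₀)) • nA with hOdef
    have hZsub : ZZ - A = (ip (B₀ - A) n₀ / det2 nA n₀) • Jv nA := by
      rw [hZdef]; exact add_sub_cancel_left A _
    have hOsub : OO - A = (-(ip (B₀ - A) (Jv n₀) / det2 nA n₀)) • nA := by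
      rw [hOdef]; exact add_sub_cancel_left A _
    have hZA : ip (ZZ - A) nA = 0 := by
      rw [hZsub, ip_smul_left, ip_Jv_left, det2_self, mul_zero]
    have hOA : ip (OO - A) (Jv nA) = 0 := by
      rw [hOsub, ip_smul_left, ip_Jv_right nA nA, det2_self, mul_zero]
    have hZ0 : ip (ZZ - B₀) n₀ = 0 := by
      have hsp : ZZ - B₀ = (ip (B₀ - A) n₀ / det2 nA n₀) • Jv nA - (B₀ - A) := by
        rw [hZdef]; abel
      rw [hsp, ip_sub_left, ip_smul_left, ip_Jv_left]
      field_simp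
      ring
    have hO0 : ip (OO - B₀) (Jv n₀) = 0 := by
      have hsp : OO - B₀ = (-(ip (B₀ - A) (Jv n₀) / det2 nA n₀)) • nA - (B₀ - A) := by
        rw [hOdef]; abel
      rw [hsp, ip_sub_left, ip_smul_left, ip_Jv_right nA n₀]
      have hanti : det2 n₀ nA = -det2 nA n₀ := by simp only [det2]; ring
      rw [hanti]
      field_simp
      ring
    -- ZZ, OO lie on the line resp. normal line at P₁
    have hZ1 : ip (ZZ - P₁) n₁ = 0 := by
      have k1 : ZZ - P₁ = (ZZ - A) - (P₁ - A) := by abel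
      have k5 : ip (ZZ - A) n₀ = ip (B₀ - A) n₀ := by
        have e : ZZ - A = (ZZ - B₀) + (B₀ - A) := by abel
        rw [e, ip_add_left, hZ0, zero_add]
      have cram : det2 nA n₀ * ip (ZZ - A) n₁ =
          -(det2 n₀ n₁ * ip (ZZ - A) nA) - det2 n₁ nA * ip (ZZ - A) n₀ := by
        simp only [det2, ip]; ring
      have main : det2 nA n₀ * ip (ZZ - P₁) n₁ = 0 := by
        rw [k1, ip_sub_left]
        linear_combination cram - det2 n₀ n₁ * hZA - det2 n₁ nA * k5 - R1
      exact (mul_eq_zero.1 main).resolve_left hind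
    have hO1 : ip (OO - P₁) (Jv n₁) = 0 := by
      have k1 : OO - P₁ = (OO - A) - (P₁ - A) := by abel
      have k5 : ip (OO - A) (Jv n₀) = ip (B₀ - A) (Jv n₀) := by
        have e : OO - A = (OO - B₀) + (B₀ - A) := by abel
        rw [e, ip_add_left, hO0, zero_add]
      have cram : det2 nA n₀ * ip (OO - A) (Jv n₁) =
          -(det2 n₀ n₁ * ip (OO - A) (Jv nA)) - det2 n₁ nA * ip (OO - A) (Jv n₀) := by
        simp only [det2, ip, Jv_zero, Jv_one]; ring
      have M1' : det2 n₁ nA * ip (B₀ - A) (Jv n₀) + det2 nA n₀ * ip (P₁ - A) (Jv n₁) = 0 := by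
        linear_combination (-1 : ℝ) * M1 + det2 n₁ nA * (ip_Jv_swap (B₀ - A) n₀)
          + det2 nA n₀ * (ip_Jv_swap (P₁ - A) n₁)
      have main : det2 nA n₀ * ip (OO - P₁) (Jv n₁) = 0 := by
        rw [k1, ip_sub_left]
        linear_combination cram - det2 n₀ n₁ * hOA - det2 n₁ nA * k5 - M1'
      exact (mul_eq_zero.1 main).resolve_left hind
    -- ZZ, OO lie on the line resp. normal line at P₂
    have hZ2 : ip (ZZ - P₂) n₂ = 0 := by
      have k1 : ZZ - P₂ = (ZZ - A) - (P₂ - A) := by abel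
      have k5 : ip (ZZ - A) n₁ = ip (P₁ - A) n₁ := by
        have e : ZZ - A = (ZZ - P₁) + (P₁ - A) := by abel
        rw [e, ip_add_left, hZ1, zero_add]
      have cram : det2 nA n₁ * ip (ZZ - A) n₂ =
          -(det2 n₁ n₂ * ip (ZZ - A) nA) - det2 n₂ nA * ip (ZZ - A) n₁ := by
        simp only [det2, ip]; ring
      have main : det2 nA n₁ * ip (ZZ - P₂) n₂ = 0 := by
        rw [k1, ip_sub_left]
        linear_combination cram - det2 n₁ n₂ * hZA - det2 n₂ nA * k5 - R2
      exact (mul_eq_zero.1 main).resolve_left hind1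
    have hO2 : ip (OO - P₂) (Jv n₂) = 0 := by
      have k1 : OO - P₂ = (OO - A) - (P₂ - A) := by abel
      have k5 : ip (OO - A) (Jv n₁) = ip (P₁ - A) (Jv n₁) := by
        have e : OO - A = (OO - P₁) + (P₁ - A) := by abel
        rw [e, ip_add_left, hO1, zero_add]
      have cram : det2 nA n₁ * ip (OO - A) (Jv n₂) =
          -(det2 n₁ n₂ * ip (OO - A) (Jv nA)) - det2 n₂ nA * ip (OO - A) (Jv n₁) := by
        simp only [det2, ip, Jv_zero, Jv_one]; ring
      have M2' : det2 n₂ nA * ip (P₁ - A) (Jv n₁) + det2 nA n₁ * ip (P₂ - A) (Jv n₂) = 0 := by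
        linear_combination (-1 : ℝ) * M2 + det2 n₂ nA * (ip_Jv_swap (P₁ - A) n₁)
          + det2 nA n₁ * (ip_Jv_swap (P₂ - A) n₂)
      have main : det2 nA n₁ * ip (OO - P₂) (Jv n₂) = 0 := by
        rw [k1, ip_sub_left]
        linear_combination cram - det2 n₁ n₂ * hOA - det2 n₂ nA * k5 - M2'
      exact (mul_eq_zero.1 main).resolve_left hind1
    -- the Thales-circle contradiction
    have qA := ip_eq_zero_of_perp nA (ZZ - A) (OO - A) locA.hn hZA hOA
    have q0 := ip_eq_zero_of_perp n₀ (ZZ - B₀) (OO - B₀) loc0.hn hZ0 hO0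
    have q1 := ip_eq_zero_of_perp n₁ (ZZ - P₁) (OO - P₁) loc1.hn hZ1 hO1
    have q2 := ip_eq_zero_of_perp n₂ (ZZ - P₂) (OO - P₂) loc2.hn hZ2 hO2
    have hu0 : ip (B₀ - A) (B₀ - A) = 1 :=
      ip_self_of_dist_one (by rw [dist_comm]; exact hdist)
    have hu1 : ip (P₁ - A) (P₁ - A) = 1 := ip_self_of_dist_one hd1A
    have hu2 : ip (P₂ - A) (P₂ - A) = 1 := ip_self_of_dist_one hd2A
    exact final_contra ZZ OO A B₀ P₁ P₂ hP₂def qA q0 q1 q2 hu0 hu1 hu2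
  -- conclusion : the two directions agree
  intro l₁ l₂ hl₁ hl₂ hsub₁ hsub₂
  obtain ⟨y₀, hy₀, x₀, hx₀, hne₀⟩ := (hpoly.seg s hs).2.2.1
  obtain ⟨y₁, hy₁, x₁, hx₁, hne₁⟩ := (hpoly.seg t ht).2.2.1
  have hds : y₀ - x₀ ≠ 0 := sub_ne_zero.2 (fun h => hne₀ h)
  have hdt : y₁ - x₁ ≠ 0 := sub_ne_zero.2 (fun h => hne₁ h)
  have hdir₁ : l₁.direction = Submodule.span ℝ {y₀ - x₀} :=
    line_dir hl₁ (hsub₁ hx₀) (hsub₁ hy₀) hds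
  have hdir₂ : l₂.direction = Submodule.span ℝ {y₁ - x₁} :=
    line_dir hl₂ (hsub₂ hx₁) (hsub₂ hy₁) hdt
  have hperp_s : ip (y₀ - x₀) nA = 0 := by
    have e : y₀ - x₀ = (y₀ - A) - (x₀ - A) := by abel
    rw [e, ip_sub_left, hperpA y₀ hy₀, hperpA x₀ hx₀, sub_zero]
  have hperp_t0 : ip (y₁ - x₁) n₀ = 0 := by
    have e : y₁ - x₁ = (y₁ - B₀) - (x₁ - B₀) := by abel
    rw [e, ip_sub_left, hperp0 y₁ hy₁, hperp0 x₁ hx₁, sub_zero]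
  have hsm : n₀ = (ip n₀ nA / ip nA nA) • nA := by
    apply eq_smul_of_perp nA n₀ locA.hn
    rw [ip_Jv_right]
    exact hpar
  have hκ : (ip n₀ nA / ip nA nA) ≠ 0 := by
    intro h0
    rw [h0, zero_smul] at hsm
    exact loc0.hn hsm
  have hperp_t : ip (y₁ - x₁) nA = 0 := by
    have h1 := hperp_t0
    rw [hsm, ip_smul_right] at h1
    exact (mul_eq_zero.1 h1).resolve_left hκ
  have hspan_s : Submodule.span ℝ {y₀ - x₀} = Submodule.span ℝ {Jv nA} := by
    obtain ⟨cs, hcs⟩ : ∃ c : ℝ, y₀ - x₀ = c • Jv nA := by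
      refine ⟨_, eq_smul_of_perp (Jv nA) _ (Jv_ne_zero locA.hn) ?_⟩
      rw [JvJv, ip_neg_right, hperp_s, neg_zero]
    have hcne : cs ≠ 0 := by
      intro h0
      rw [h0, zero_smul] at hcs
      exact hds hcs
    rw [hcs]
    exact Submodule.span_singleton_smul_eq (isUnit_iff_ne_zero.2 hcne) _
  have hspan_t : Submodule.span ℝ {y₁ - x₁} = Submodule.span ℝ {Jv nA} := by
    obtain ⟨ct, hct⟩ : ∃ c : ℝ, y₁ - x₁ = c • Jv nA := by
      refine ⟨_, eq_smul_of_perp (Jv nA) _ (Jv_ne_zero locA.hn) ?_⟩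
      rw [JvJv, ip_neg_right, hperp_t, neg_zero]
    have hcne : ct ≠ 0 := by
      intro h0
      rw [h0, zero_smul] at hct
      exact hdt hct
    rw [hct]
    exact Submodule.span_singleton_smul_eq (isUnit_iff_ne_zero.2 hcne) _
  rw [hdir₁, hdir₂, hspan_s, hspan_t]

end
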